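/- arXiv:math/0411057 — 3 statements merged into one kernel-verified Lean document; each statement's English description precedes it below -/
import Mathlib

section
/- Let α be a type and F = FreeGroup α the free group on α, with generators x_j = FreeGroup.of j. For every i : α there exists a unique map d : F → ℤ[F] such that (i) d(x_j) = 1 if j = i and d(x_j) = 0 if j ≠ i, and (ii) d satisfies the Fox product rule d(g·h) = d(g) + d(h)·g⁻¹ for all g, h ∈ F. (This map is the i-th free differential ∂_i of the free differential calculus used in Section 6 of the paper.) -/
/-- A map `d : G → ℤ[G]` satisfies the *Fox product rule* if
`d (g * h) = d g + d h * g⁻¹` for all `g, h : G`, where group elements are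
identified with basis elements of the integral group ring `MonoidAlgebra ℤ G`. -/
def FoxRule {G : Type*} [Group G] (d : G → MonoidAlgebra ℤ G) : Prop :=
  ∀ g h : G, d (g * h) = d g + d h * MonoidAlgebra.of ℤ G (g⁻¹)

/-- Auxiliary group of pairs used to build the Fox derivative. -/
@[ext]
structure FoxAux (G : Type*) [Group G] where
  a : MonoidAlgebra ℤ G
  g : G

namespace FoxAux

variable {G : Type*} [Group G]

noncomputable instance : Mul (FoxAux G) :=
  ⟨fun x y => ⟨x.a + y.a * MonoidAlgebra.of ℤ G x.g⁻¹, x.g * y.g⟩⟩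

noncomputable instance : One (FoxAux G) := ⟨⟨0, 1⟩⟩

noncomputable instance : Inv (FoxAux G) :=
  ⟨fun x => ⟨-(x.a * MonoidAlgebra.of ℤ G x.g), x.g⁻¹⟩⟩

@[simp] lemma mul_a (x y : FoxAux G) :
    (x * y).a = x.a + y.a * MonoidAlgebra.of ℤ G x.g⁻¹ := rfl

@[simp] lemma mul_g (x y : FoxAux G) : (x * y).g = x.g * y.g := rfl

@[simp] lemma one_a : (1 : FoxAux G).a = 0 := rfl
@[simp] lemma one_g : (1 : FoxAux G).g = 1 := rfl

@[simp] lemma inv_a (x : FoxAux G) :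
    x⁻¹.a = -(x.a * MonoidAlgebra.of ℤ G x.g) := rfl
@[simp] lemma inv_g (x : FoxAux G) : x⁻¹.g = x.g⁻¹ := rfl

noncomputable instance : Group (FoxAux G) where
  mul_assoc x y z := by
    ext <;> simp [mul_inv_rev, map_mul, mul_add, add_mul, mul_assoc, add_assoc]
  one_mul x := by ext <;> simp
  mul_one x := by ext <;> simp
  inv_mul_cancel x := by ext <;> simp

/-- Projection to the group component. -/
def snd : FoxAux G →* G where
  toFun x := x.g
  map_one' := rfl
  map_mul' _ _ := rfl

end FoxAux

/-- For every generator index `i`, there is a unique map `d : F → ℤ[F]` on the free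
group `F = FreeGroup α` with `d (x_j) = δ_{ij}` satisfying the Fox product rule:
the `i`-th free differential `∂_i` of the free differential calculus. -/
theorem free_differential_exists_unique (α : Type*) [DecidableEq α] (i : α) :
    ∃! d : FreeGroup α → MonoidAlgebra ℤ (FreeGroup α),
      (∀ j : α, d (FreeGroup.of j) = if j = i then 1 else 0) ∧ FoxRule d := by
  set φ : FreeGroup α →* FoxAux (FreeGroup α) :=
    FreeGroup.lift (fun j => ⟨if j = i then 1 else 0, FreeGroup.of j⟩) with hφ
  have hsnd : ∀ g : FreeGroup α, (φ g).g = g := by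
    intro g
    have : FoxAux.snd.comp φ = MonoidHom.id (FreeGroup α) := by
      apply FreeGroup.ext_hom
      intro j
      simp [hφ, FoxAux.snd]
    have := DFunLike.congr_fun this g
    simpa [FoxAux.snd] using this
  refine ⟨fun g => (φ g).a, ⟨fun j => by simp [hφ], fun g h => by
    simp only [map_mul, FoxAux.mul_a, hsnd]⟩, ?_⟩
  rintro d' ⟨hd1, hd2⟩
  have hone : d' 1 = 0 := by
    have h := hd2 1 1
    rw [mul_one, inv_one, map_one, mul_one] at h
    exact (left_eq_add.mp h)
  set ψ : FreeGroup α →* FoxAux (FreeGroup α) :=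
    { toFun := fun g => ⟨d' g, g⟩
      map_one' := by ext <;> simp [hone]
      map_mul' := fun g h => by ext <;> simp [hd2 g h] } with hψ
  have : ψ = φ := by
    apply FreeGroup.ext_hom
    intro j
    ext <;> simp [hψ, hφ, hd1]
  funext g
  have := DFunLike.congr_fun this g
  simpa [hψ] using congrArg FoxAux.a this
end

section
/- Let G be a group and let d : G → ℤ[G] satisfy the Fox product rule. If x, y ∈ G and d(x) = 0, then, writing yˣ = x⁻¹·y·x, one has d([y, yˣ]) = d(y)·(1 + x·y⁻¹ − (yˣ)⁻¹·[yˣ, y] − x·[yˣ, y]) in ℤ[G]. (This is the identity d([y,yˣ]) = (dy)·p with p = 1 + xy⁻¹ − (yˣ)⁻¹[yˣ,y] − x[yˣ,y], established in Case 1 of the proof of Lemma 6.6.) -/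
open scoped commutatorElement

/-- If `d x = 0` then, for `yˣ = x⁻¹ y x`,
`d ⁅y, yˣ⁆ = d y * (1 + x y⁻¹ − (yˣ)⁻¹ ⁅yˣ, y⁆ − x ⁅yˣ, y⁆)`. -/
theorem foxRule_commutator_conj {G : Type*} [Group G] (d : G → MonoidAlgebra ℤ G)
    (hd : FoxRule d) (x y : G) (hx : d x = 0) :
    d ⁅y, x⁻¹ * y * x⁆ =
      d y * (1 + MonoidAlgebra.of ℤ G (x * y⁻¹)
        - MonoidAlgebra.of ℤ G ((x⁻¹ * y * x)⁻¹ * ⁅x⁻¹ * y * x, y⁆)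
        - MonoidAlgebra.of ℤ G (x * ⁅x⁻¹ * y * x, y⁆)) := by
  have h1 : d 1 = 0 := by
    have h := hd 1 1
    simpa [← MonoidAlgebra.one_def] using h
  have hinv : ∀ g : G, d g⁻¹ = -(d g * MonoidAlgebra.of ℤ G g) := by
    intro g
    have h := hd g g⁻¹
    rw [mul_inv_cancel, h1] at h
    have h2 := congrArg (· * MonoidAlgebra.of ℤ G g) h
    simp only [zero_mul, add_mul, mul_assoc, ← map_mul, inv_mul_cancel, map_one, mul_one] at h2
    exact eq_neg_of_add_eq_zero_right h2.symm
  set z := x⁻¹ * y * x with hzdef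
  have hxinv : d x⁻¹ = 0 := by rw [hinv, hx]; simp
  have hz : d z = d y * MonoidAlgebra.of ℤ G x := by
    have ha := hd x⁻¹ (y * x)
    have hb := hd y x
    rw [hb, hx, hxinv, inv_inv] at ha
    calc d z = d (x⁻¹ * (y * x)) := by rw [hzdef, mul_assoc]
    _ = d y * MonoidAlgebra.of ℤ G x := by rw [ha]; simp
  have hzinv : d z⁻¹ = -(d y * MonoidAlgebra.of ℤ G (x * z)) := by
    rw [hinv, hz, mul_assoc, ← map_mul]
  have hyz := hd y z
  have hyzy := hd (y * z) y⁻¹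
  have hcm := hd (y * z * y⁻¹) z⁻¹
  rw [commutatorElement_def, hcm, hyzy, hyz, hz, hinv y, hzinv]
  have e1 : x * y⁻¹ = x * y⁻¹ := rfl
  have e2 : (y : G) * (y * z)⁻¹ = z⁻¹ * ⁅z, y⁆ := by
    rw [commutatorElement_def]; group
  have e3 : (x * z) * (y * z * y⁻¹)⁻¹ = x * ⁅z, y⁆ := by
    rw [commutatorElement_def]; group
  calc d y + d y * MonoidAlgebra.of ℤ G x * MonoidAlgebra.of ℤ G y⁻¹ +
      -(d y * MonoidAlgebra.of ℤ G y) * MonoidAlgebra.of ℤ G (y * z)⁻¹ +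
      -(d y * MonoidAlgebra.of ℤ G (x * z)) * MonoidAlgebra.of ℤ G (y * z * y⁻¹)⁻¹
      = d y + d y * MonoidAlgebra.of ℤ G (x * y⁻¹)
        - d y * MonoidAlgebra.of ℤ G (y * (y * z)⁻¹)
        - d y * MonoidAlgebra.of ℤ G ((x * z) * (y * z * y⁻¹)⁻¹) := by
        simp only [map_mul, mul_assoc, neg_mul]
        noncomm_ring
    _ = _ := by
        rw [e2, e3]
        noncomm_ring
end

section
/- Let G and Q be groups, ψ : G → Q a group homomorphism, and let ψ̃ : ℤ[G] → ℤ[Q] be the induced ring homomorphism. Let x, y ∈ G with yˣ = x⁻¹·y·x, and suppose ψ([yˣ, y]) = 1 and ψ(y) ≠ 1, and suppose further that there is a group homomorphism q : Q → A with q(ψ(x)) ≠ 1 and q(ψ(y)) = 1 and q(ψ(yˣ)) = 1. Then the element 1 + ψ(x·y⁻¹) − ψ((yˣ)⁻¹) − ψ(x) is nonzero in ℤ[Q]. (This is the nontriviality of rπ_{k+1}(p) established in Case 1 of the proof of Lemma 6.6: the four group elements project under q to 1, q(ψ(x)), 1, q(ψ(x)), so the only possible pairing would force ψ(x) = ψ(x·y⁻¹),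 contradicting ψ(y) ≠ 1.) -/
open scoped commutatorElement

/-- Nontriviality of `rπ_{k+1}(p)`: if `ψ ⁅yˣ, y⁆ = 1`, `ψ y ≠ 1`, and there
is a further quotient `q` with `q (ψ x) ≠ 1`, `q (ψ y) = 1`, `q (ψ yˣ) = 1`,
then `1 + ψ(x y⁻¹) − ψ((yˣ)⁻¹) − ψ(x)` is nonzero in `ℤ[Q]`. -/
theorem p_nontrivial {G Q A : Type*} [Group G] [Group Q] [Group A]
    (ψ : G →* Q) (x y : G)
    (h1 : ψ ⁅x⁻¹ * y * x, y⁆ = 1) (h2 : ψ y ≠ 1)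
    (q : Q →* A) (hx : q (ψ x) ≠ 1) (hy : q (ψ y) = 1)
    (hyx : q (ψ (x⁻¹ * y * x)) = 1) :
    (1 + MonoidAlgebra.of ℤ Q (ψ (x * y⁻¹))
      - MonoidAlgebra.of ℤ Q (ψ ((x⁻¹ * y * x)⁻¹))
      - MonoidAlgebra.of ℤ Q (ψ x) : MonoidAlgebra ℤ Q) ≠ 0 := by
  intro h
  set a := ψ (x * y⁻¹) with ha
  set b := ψ ((x⁻¹ * y * x)⁻¹) with hb
  set c := ψ x with hc
  have hqa : q a = q c := by
    simp [ha, hc, map_mul, map_inv, hy]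
  have hqb : q b = 1 := by
    rw [hb, map_inv, map_inv, hyx, inv_one]
  have hab : a ≠ b := fun e => hx (by rw [← hqa, e, hqb])
  have hcb : c ≠ b := fun e => hx (by rw [← hqb, e])
  have h' : (Finsupp.single (1 : Q) (1 : ℤ) + Finsupp.single a 1
      - Finsupp.single b 1 - Finsupp.single c 1 : Q →₀ ℤ) = 0 := by
    simpa [MonoidAlgebra.one_def, MonoidAlgebra.of_apply] using congrArg MonoidAlgebra.coeff h
  have hcoef := DFunLike.congr_fun h' b
  have hb1 : b = 1 := by
    by_contra hbne
    simp only [Finsupp.add_apply, Finsupp.sub_apply, Finsupp.coe_zero,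
      Pi.zero_apply] at hcoef
    rw [Finsupp.single_eq_of_ne' (fun e => hbne e.symm), Finsupp.single_eq_of_ne' hab,
      Finsupp.single_eq_same, Finsupp.single_eq_of_ne' hcb] at hcoef
    omega
  rw [hb1] at h'
  have hac : (Finsupp.single a (1 : ℤ) : Q →₀ ℤ) = Finsupp.single c 1 := by
    have h2' : (Finsupp.single a (1 : ℤ) - Finsupp.single c 1 : Q →₀ ℤ) = 0 := by
      rw [← h']; abel
    rwa [sub_eq_zero] at h2'
  have hac' : a = c := by
    exact Finsupp.single_left_injective (by norm_num : (1 : ℤ) ≠ 0) hac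
  apply h2
  have : ψ x * (ψ y)⁻¹ = ψ x := by simpa [ha, hc, map_mul, map_inv] using hac'
  have := mul_eq_left.mp this
  simpa using this
end
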